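/- Let g and g' be two discrete-time Markov transition kernels on a σ-compact metric state space X with stationary distributions π and π' respectively, and let t_m, t_m' be their mixing times (with threshold 1/4). If sup_{x∈X} ‖g(x,1,·) − g'(x,1,·)‖ ≤ 1/(256 · t_m), then (1/4) t_m' ≤ t_m ≤ 4 t_m'. -/

import Mathlib

open MeasureTheory ENNReal

noncomputable section

namespace MixHit

variable {X : Type*} [MeasurableSpace X]

/-- Total variation distance between two Borel measures. -/
def tv (μ ν : Measure X) : ℝ≥0∞ :=
  ⨆ (A : Set X) (_ : MeasurableSet A), (μ A - ν A) ⊔ (ν A - μ A)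

/-- `g` is a Markov transition kernel: each `g x` is a (Borel) probability measure,
measurably in `x`. -/
def IsMarkov (g : X → Measure X) : Prop :=
  (∀ x, IsProbabilityMeasure (g x)) ∧
    ∀ A : Set X, MeasurableSet A → Measurable fun x => g x A

/-- `t`-step transition probabilities (`iterK g 0 x = δ_x`). -/
def iterK (g : X → Measure X) : ℕ → X → Measure X
  | 0 => fun x => Measure.dirac x
  | n + 1 => fun x => (g x).bind (iterK g n)

/-- `π` is a stationary distribution for `g`. -/
def Stationary (g : X → Measure X) (π : Measure X) : Prop :=
  ∀ A : Set X, MeasurableSet A → ∫⁻ x, g x A ∂π = π A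

/-- `g` is reversible with respect to `π`. -/
def Reversible (g : X → Measure X) (π : Measure X) : Prop :=
  ∀ A B : Set X, MeasurableSet A → MeasurableSet B →
    ∫⁻ x in A, g x B ∂π = ∫⁻ x in B, g x A ∂π

/-- The lazy kernel `g_L(x,·) = (1/2) g(x,·) + (1/2) δ_x`. -/
def lazy (g : X → Measure X) : X → Measure X := fun x =>
  (2 : ℝ≥0∞)⁻¹ • g x + (2 : ℝ≥0∞)⁻¹ • Measure.dirac x

/-- Mixing time `min {t : sup_x ‖g^t(x,·) − π‖ ≤ ε}`, as an element of `ℝ≥0∞`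
(`⊤` if there is no such `t`). -/
def mixTime (g : X → Measure X) (π : Measure X) (ε : ℝ≥0∞) : ℝ≥0∞ :=
  ⨅ (t : ℕ) (_ : ∀ x, tv (iterK g t x) π ≤ ε), (t : ℝ≥0∞)

/-- `d̄(t) = sup_{x,y} ‖g^t(x,·) − g^t(y,·)‖`. -/
def dbar (g : X → Measure X) (t : ℕ) : ℝ≥0∞ :=
  ⨆ (x : X) (y : X), tv (iterK g t x) (iterK g t y)

/-- Standardized mixing time `min {t : d̄(t) ≤ ε}` (`⊤` if there is no such `t`). -/
def stdMix (g : X → Measure X) (ε : ℝ≥0∞) : ℝ≥0∞ :=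
  ⨅ (t : ℕ) (_ : dbar g t ≤ ε), (t : ℝ≥0∞)

/-- `P_x(τ_A = t)` for the chain with kernel `g` started at `x`, where
`τ_A = min {t : X_t ∈ A}` (first-step recursion). -/
def hitEq (g : X → Measure X) (A : Set X) : ℕ → X → ℝ≥0∞
  | 0 => fun x => A.indicator (fun _ => 1) x
  | n + 1 => fun x => Aᶜ.indicator (fun x' => ∫⁻ y, hitEq g A n y ∂(g x')) x

/-- `P_x(τ_A ≤ t)`. -/
def hitLE (g : X → Measure X) (A : Set X) (t : ℕ) (x : X) : ℝ≥0∞ :=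
  ∑ s ∈ Finset.range (t + 1), hitEq g A s x

/-- `E_x[τ_A] = ∑_{t ≥ 0} P_x(τ_A > t)`. -/
def expHit (g : X → Measure X) (A : Set X) (x : X) : ℝ≥0∞ :=
  ∑' t : ℕ, (1 - hitLE g A t x)

/-- Maximum hitting time `t_H(α) = sup {E_x[τ_A] : x ∈ X, A Borel, π(A) ≥ α}`. -/
def maxHit (g : X → Measure X) (π : Measure X) (α : ℝ) : ℝ≥0∞ :=
  ⨆ (x : X) (A : Set X) (_ : MeasurableSet A) (_ : ENNReal.ofReal α ≤ π A),
    expHit g A x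

/-- Large hitting time
`τ_g(α) = min {t : inf {P_x(τ_A ≤ t) : x ∈ X, A Borel, π(A) ≥ α} > 0.9}`. -/
def largeHit (g : X → Measure X) (π : Measure X) (α : ℝ) : ℝ≥0∞ :=
  ⨅ (t : ℕ) (_ : (9 / 10 : ℝ≥0∞) <
      ⨅ (x : X) (A : Set X) (_ : MeasurableSet A) (_ : ENNReal.ofReal α ≤ π A),
        hitLE g A t x),
    (t : ℝ≥0∞)

/-- The strong Feller property: continuity of `x ↦ g(x,·)` in total variation. -/
def StrongFeller [PseudoMetricSpace X] (g : X → Measure X) : Prop :=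
  ∀ x : X, ∀ ε : ℝ, 0 < ε → ∃ δ : ℝ, 0 < δ ∧
    ∀ y : X, dist y x < δ → tv (g x) (g y) < ENNReal.ofReal ε

/-- Law of `X_t` on the event that `t` is the first time the chain lies in `S`. -/
def enterDist (g : X → Measure X) (S : Set X) : ℕ → X → Measure X
  | 0 => fun x => (Measure.dirac x).restrict S
  | n + 1 => fun x => Sᶜ.indicator (fun x' => (g x').bind (enterDist g S n)) x

/-- Law of the chain's position at its first entrance (at a time `≥ 0`) into `S`. -/
def hitMeasure (g : X → Measure X) (S : Set X) (x : X) : Measure X :=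
  Measure.sum fun t => enterDist g S t x

/-- One step of the trace of `g` on `S`: take one `g`-step, then run until the
first entrance into `S`. -/
def traceK (g : X → Measure X) (S : Set X) : X → Measure X :=
  fun x => (g x).bind (hitMeasure g S)

/-- The trace of `g` on `S`, viewed as a kernel on the subtype `S`. -/
def traceSub (g : X → Measure X) (S : Set X) : S → Measure S :=
  fun x => (traceK g S (x : X)).comap (Subtype.val)

/-- Normalization of `π` to `S`, as a measure on the subtype `S`. -/
def normSub (π : Measure X) (S : Set X) : Measure S :=
  (π S)⁻¹ • π.comap (Subtype.val : S → X)

/-- Ergodicity: from every starting point, the chain converges to `π`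
in total variation. -/
def ErgodicK (g : X → Measure X) (π : Measure X) : Prop :=
  Stationary g π ∧
    ∀ x : X, Filter.Tendsto (fun t => tv (iterK g t x) π) Filter.atTop (nhds 0)


section Aux


theorem tv_comm (μ ν : Measure X) : tv μ ν = tv ν μ := by
  unfold tv
  congr 1; ext A; congr 1; ext hA; exact sup_comm _ _

theorem sub_le_tv {μ ν : Measure X} {A : Set X} (hA : MeasurableSet A) :
    μ A - ν A ≤ tv μ ν :=
  le_iSup₂_of_le A hA le_sup_left

theorem tv_le_of {μ ν : Measure X} {c : ℝ≥0∞}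
    (h : ∀ A : Set X, MeasurableSet A → μ A ≤ ν A + c)
    (h' : ∀ A : Set X, MeasurableSet A → ν A ≤ μ A + c) : tv μ ν ≤ c := by
  refine iSup₂_le fun A hA => sup_le ?_ ?_
  · rw [tsub_le_iff_left]; exact h A hA
  · rw [tsub_le_iff_left]; exact h' A hA

attribute [irreducible] tv

theorem apply_le_tv {μ ν : Measure X} {A : Set X} (hA : MeasurableSet A) :
    μ A ≤ ν A + tv μ ν := by
  have := sub_le_tv (μ := μ) (ν := ν) hA
  rw [tsub_le_iff_left] at this
  exact this

theorem apply_le_tv' {μ ν : Measure X} {A : Set X} (hA : MeasurableSet A) :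
    μ A ≤ ν A + tv ν μ := by
  rw [tv_comm]; exact apply_le_tv hA

theorem tv_self (μ : Measure X) : tv μ μ = 0 :=
  le_antisymm (tv_le_of (fun A _ => by simp) (fun A _ => by simp)) zero_le

theorem tv_triangle (μ ν ρ : Measure X) : tv μ ρ ≤ tv μ ν + tv ν ρ := by
  refine tv_le_of (fun A hA => ?_) (fun A hA => ?_)
  · have h1 : μ A ≤ ν A + tv μ ν := apply_le_tv hA
    have h2 : ν A ≤ ρ A + tv ν ρ := apply_le_tv hA
    refine h1.trans ((add_le_add_left h2 _).trans ?_)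
    rw [add_assoc, add_comm (tv ν ρ) (tv μ ν)]
  · have h1 : ρ A ≤ ν A + tv ν ρ := apply_le_tv' hA
    have h2 : ν A ≤ μ A + tv μ ν := apply_le_tv' hA
    refine h1.trans ((add_le_add_left h2 _).trans ?_)
    rw [add_assoc]

theorem tv_le_one (μ ν : Measure X) [IsProbabilityMeasure μ] [IsProbabilityMeasure ν] :
    tv μ ν ≤ 1 :=
  tv_le_of (fun _ _ => le_add_left prob_le_one) (fun _ _ => le_add_left prob_le_one)


theorem isProb_bind {μ : Measure X} [IsProbabilityMeasure μ] {K : X → Measure X}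
    (hK : Measurable K) (hKp : ∀ x, IsProbabilityMeasure (K x)) :
    IsProbabilityMeasure (μ.bind K) := by
  constructor
  rw [Measure.bind_apply MeasurableSet.univ hK.aemeasurable]
  have h1 : ∀ x, K x Set.univ = 1 := fun x => (hKp x).measure_univ
  simp [h1]

theorem le_biSup_tv {K : X → Measure X} (x y : X) :
    tv (K x) (K y) ≤ ⨆ (a : X) (b : X), tv (K a) (K b) :=
  le_trans (le_iSup (fun b => tv (K x) (K b)) y)
    (le_iSup (fun a => ⨆ b, tv (K a) (K b)) x)

theorem bind_apply_le_of_tv {μ ν : Measure X} [IsProbabilityMeasure μ] [IsProbabilityMeasure ν]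
    {K : X → Measure X} (hK : Measurable K) (hKp : ∀ x, IsProbabilityMeasure (K x))
    {A : Set X} (hA : MeasurableSet A) :
    (μ.bind K) A ≤ (ν.bind K) A + tv μ ν * ⨆ (x : X) (y : X), tv (K x) (K y) := by
  obtain ⟨s, hs, hs1, hs2⟩ := hahn_decomposition (μ := μ) (ν := ν)
  set D := ⨆ (x : X) (y : X), tv (K x) (K y) with hD
  set f : X → ℝ≥0∞ := fun x => K x A with hf
  have hfm : Measurable f := (Measure.measurable_coe hA).comp hK
  have hf1 : ∀ x, f x ≤ 1 := fun x =>
    (measure_mono (Set.subset_univ A)).trans (le_of_eq (hKp x).measure_univ)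
  have hle1 : ν.restrict s ≤ μ.restrict s := by
    rw [Measure.le_iff]; intro t ht
    rw [Measure.restrict_apply ht, Measure.restrict_apply ht]
    exact hs1 _ (ht.inter hs) Set.inter_subset_right
  have hle2 : μ.restrict sᶜ ≤ ν.restrict sᶜ := by
    rw [Measure.le_iff]; intro t ht
    rw [Measure.restrict_apply ht, Measure.restrict_apply ht]
    exact hs2 _ (ht.inter hs.compl) Set.inter_subset_right
  set μ₁ : Measure X := μ.restrict s - ν.restrict s with hμ₁
  set ν₁ : Measure X := ν.restrict sᶜ - μ.restrict sᶜ with hν₁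
  have hμdec : μ.restrict s = μ₁ + ν.restrict s := (Measure.sub_add_cancel_of_le hle1).symm
  have hνdec : ν.restrict sᶜ = ν₁ + μ.restrict sᶜ := (Measure.sub_add_cancel_of_le hle2).symm
  have hc1 : μ₁ Set.univ = μ s - ν s := by
    rw [hμ₁, Measure.sub_apply MeasurableSet.univ hle1]
    simp
  have hc2 : ν₁ Set.univ = ν sᶜ - μ sᶜ := by
    rw [hν₁, Measure.sub_apply MeasurableSet.univ hle2]
    simp
  have hνs : ν s ≠ ∞ := measure_ne_top ν s
  have hμsc : μ sᶜ ≠ ∞ := measure_ne_top μ sᶜ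
  -- equal masses
  have hmass : μ₁ Set.univ = ν₁ Set.univ := by
    rw [hc1, hc2]
    have ha : μ s + μ sᶜ = ν s + ν sᶜ := by
      rw [measure_add_measure_compl hs, measure_add_measure_compl hs, measure_univ, measure_univ]
    rcases le_total (ν s) (μ s) with h1 | h1
    · have h2 : μ sᶜ ≤ ν sᶜ := by
        have h5 : ν s + μ sᶜ ≤ ν s + ν sᶜ := by
          rw [← ha]; exact add_le_add_left h1 _
        exact (ENNReal.add_le_add_iff_left hνs).mp h5
      have h3 : μ s + μ sᶜ = (ν sᶜ - μ sᶜ + ν s) + μ sᶜ := by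
        rw [add_right_comm, tsub_add_cancel_of_le h2, ha, add_comm]
      rw [add_comm (μ s), add_comm _ (μ sᶜ)] at h3
      have h4 : μ s = ν sᶜ - μ sᶜ + ν s := (ENNReal.add_right_inj hμsc).mp h3
      exact ENNReal.sub_eq_of_eq_add hνs h4
    · have h2 : ν sᶜ ≤ μ sᶜ := by
        have h5 : μ s + ν sᶜ ≤ μ s + μ sᶜ := by
          rw [ha]; exact add_le_add_left h1 _
        exact (ENNReal.add_le_add_iff_left (measure_ne_top μ s)).mp h5
      rw [tsub_eq_zero_of_le h1, tsub_eq_zero_of_le h2]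
  have hcne : μ₁ Set.univ ≠ ∞ := by
    rw [hc1]
    exact (tsub_le_self.trans_lt (measure_lt_top μ s)).ne
  have hcle : μ₁ Set.univ ≤ tv μ ν := by rw [hc1]; exact sub_le_tv hs
  -- the key estimate on the singular parts
  have hkey : ∫⁻ x, f x ∂μ₁ ≤ ∫⁻ x, f x ∂ν₁ + μ₁ Set.univ * D := by
    rcases eq_or_ne (μ₁ Set.univ) 0 with hc0 | hc0
    · have hz : μ₁ = 0 := Measure.measure_univ_eq_zero.mp hc0
      rw [hz]; simp
    · set m1 : Measure X := (μ₁ Set.univ)⁻¹ • μ₁ with hm1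
      set m2 : Measure X := (μ₁ Set.univ)⁻¹ • ν₁ with hm2
      have hp1 : IsProbabilityMeasure m1 := by
        constructor
        rw [hm1, Measure.smul_apply, smul_eq_mul, ENNReal.inv_mul_cancel hc0 hcne]
      have hp2 : IsProbabilityMeasure m2 := by
        constructor
        rw [hm2, Measure.smul_apply, smul_eq_mul, ← hmass, ENNReal.inv_mul_cancel hc0 hcne]
      have hstep : ∀ y : X, ∫⁻ x, f x ∂m1 ≤ f y + D := by
        intro y
        have hpt : ∀ x, f x ≤ f y + D := by
          intro x
          exact (apply_le_tv (ν := K y) hA).trans (add_le_add_right (le_biSup_tv x y) _)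
        calc ∫⁻ x, f x ∂m1 ≤ ∫⁻ _, f y + D ∂m1 := lintegral_mono hpt
          _ = f y + D := by rw [lintegral_const, hp1.measure_univ, mul_one]
      have hmain : ∫⁻ x, f x ∂m1 ≤ ∫⁻ x, f x ∂m2 + D := by
        calc ∫⁻ x, f x ∂m1 = ∫⁻ _, (∫⁻ x, f x ∂m1) ∂m2 := by
              rw [lintegral_const, hp2.measure_univ, mul_one]
          _ ≤ ∫⁻ y, f y + D ∂m2 := lintegral_mono hstep
          _ = ∫⁻ x, f x ∂m2 + D := by
              rw [lintegral_add_right _ measurable_const, lintegral_const,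
                hp2.measure_univ, mul_one]
      have e1 : ∫⁻ x, f x ∂μ₁ = μ₁ Set.univ * ∫⁻ x, f x ∂m1 := by
        rw [hm1, lintegral_smul_measure, smul_eq_mul, ← mul_assoc, ENNReal.mul_inv_cancel hc0 hcne, one_mul]
      have e2 : ∫⁻ x, f x ∂ν₁ = μ₁ Set.univ * ∫⁻ x, f x ∂m2 := by
        rw [hm2, lintegral_smul_measure, smul_eq_mul, ← mul_assoc, ENNReal.mul_inv_cancel hc0 hcne, one_mul]
      rw [e1, e2]
      calc μ₁ Set.univ * ∫⁻ x, f x ∂m1 ≤ μ₁ Set.univ * (∫⁻ x, f x ∂m2 + D) :=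
            mul_le_mul_right hmain _
        _ = μ₁ Set.univ * ∫⁻ x, f x ∂m2 + μ₁ Set.univ * D := mul_add _ _ _
  -- decompose both sides
  have e1 : (μ.bind K) A = ∫⁻ x, f x ∂μ₁ + (∫⁻ x in s, f x ∂ν + ∫⁻ x in sᶜ, f x ∂μ) := by
    rw [Measure.bind_apply hA hK.aemeasurable, ← lintegral_add_compl f hs]
    have h6 : ∫⁻ x in s, f x ∂μ = ∫⁻ x, f x ∂μ₁ + ∫⁻ x in s, f x ∂ν := by
      conv_lhs => rw [show (∫⁻ x in s, f x ∂μ) = ∫⁻ x, f x ∂(μ.restrict s) from rfl, hμdec]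
      rw [lintegral_add_measure]
    rw [h6, add_assoc]
  have e2 : (ν.bind K) A = ∫⁻ x, f x ∂ν₁ + (∫⁻ x in s, f x ∂ν + ∫⁻ x in sᶜ, f x ∂μ) := by
    rw [Measure.bind_apply hA hK.aemeasurable, ← lintegral_add_compl f hs]
    have h6 : ∫⁻ x in sᶜ, f x ∂ν = ∫⁻ x, f x ∂ν₁ + ∫⁻ x in sᶜ, f x ∂μ := by
      conv_lhs => rw [show (∫⁻ x in sᶜ, f x ∂ν) = ∫⁻ x, f x ∂(ν.restrict sᶜ) from rfl, hνdec]
      rw [lintegral_add_measure]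
    rw [h6]
    ring
  rw [e1, e2]
  calc ∫⁻ x, f x ∂μ₁ + (∫⁻ x in s, f x ∂ν + ∫⁻ x in sᶜ, f x ∂μ)
      ≤ (∫⁻ x, f x ∂ν₁ + μ₁ Set.univ * D) + (∫⁻ x in s, f x ∂ν + ∫⁻ x in sᶜ, f x ∂μ) :=
        add_le_add_left hkey _
    _ ≤ (∫⁻ x, f x ∂ν₁ + tv μ ν * D) + (∫⁻ x in s, f x ∂ν + ∫⁻ x in sᶜ, f x ∂μ) :=
        add_le_add_left (add_le_add_right (mul_le_mul_left hcle D) _) _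
    _ = ∫⁻ x, f x ∂ν₁ + (∫⁻ x in s, f x ∂ν + ∫⁻ x in sᶜ, f x ∂μ) + tv μ ν * D := by
        ring


theorem tv_bind_le_mul {μ ν : Measure X} [IsProbabilityMeasure μ] [IsProbabilityMeasure ν]
    {K : X → Measure X} (hK : Measurable K) (hKp : ∀ x, IsProbabilityMeasure (K x)) :
    tv (μ.bind K) (ν.bind K) ≤ tv μ ν * ⨆ (x : X) (y : X), tv (K x) (K y) := by
  refine tv_le_of (fun A hA => bind_apply_le_of_tv hK hKp hA) (fun A hA => ?_)
  rw [tv_comm]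
  exact bind_apply_le_of_tv hK hKp hA

theorem tv_bind_le_one {μ ν : Measure X} [IsProbabilityMeasure μ] [IsProbabilityMeasure ν]
    {K : X → Measure X} (hK : Measurable K) (hKp : ∀ x, IsProbabilityMeasure (K x)) :
    tv (μ.bind K) (ν.bind K) ≤ tv μ ν := by
  refine (tv_bind_le_mul hK hKp).trans ?_
  have h1 : (⨆ (x : X) (y : X), tv (K x) (K y)) ≤ 1 := by
    refine iSup_le fun x => iSup_le fun y => ?_
    have := hKp x; have := hKp y
    exact tv_le_one _ _
  calc tv μ ν * ⨆ (x : X) (y : X), tv (K x) (K y) ≤ tv μ ν * 1 := mul_le_mul_right h1 _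
    _ = tv μ ν := mul_one _

theorem tv_bind_pair {μ : Measure X} [IsProbabilityMeasure μ]
    {K K' : X → Measure X} (hK : Measurable K) (hK' : Measurable K') :
    tv (μ.bind K) (μ.bind K') ≤ ⨆ x : X, tv (K x) (K' x) := by
  have key : ∀ (L L' : X → Measure X), Measurable L → Measurable L' →
      ∀ A : Set X, MeasurableSet A →
      (μ.bind L) A ≤ (μ.bind L') A + ⨆ x : X, tv (L x) (L' x) := by
    intro L L' hL hL' A hA
    rw [Measure.bind_apply hA hL.aemeasurable, Measure.bind_apply hA hL'.aemeasurable]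
    have hpt : ∀ x, L x A ≤ L' x A + ⨆ x : X, tv (L x) (L' x) :=
      fun x => (apply_le_tv hA).trans
        (add_le_add_right (le_iSup (fun x => tv (L x) (L' x)) x) _)
    calc ∫⁻ x, L x A ∂μ ≤ ∫⁻ x, (L' x A + ⨆ x : X, tv (L x) (L' x)) ∂μ := lintegral_mono hpt
      _ = ∫⁻ x, L' x A ∂μ + ⨆ x : X, tv (L x) (L' x) := by
          rw [lintegral_add_right _ measurable_const, lintegral_const, measure_univ, mul_one]
  refine tv_le_of (fun A hA => key K K' hK hK' A hA) (fun A hA => ?_)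
  have h := key K' K hK' hK A hA
  have h2 : (⨆ x : X, tv (K' x) (K x)) = ⨆ x : X, tv (K x) (K' x) := by
    congr 1; ext x; exact tv_comm _ _
  rw [h2] at h
  exact h

theorem measurable_iterK {g : X → Measure X} (hg : Measurable g) (n : ℕ) :
    Measurable (iterK g n) := by
  induction n with
  | zero => exact Measure.measurable_dirac
  | succ n ih => exact (Measure.measurable_bind' ih).comp hg

theorem isProb_iterK {g : X → Measure X} (hg : Measurable g)
    (hgp : ∀ x, IsProbabilityMeasure (g x)) (n : ℕ) :
    ∀ x, IsProbabilityMeasure (iterK g n x) := by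
  induction n with
  | zero => intro x; exact Measure.dirac.isProbabilityMeasure
  | succ n ih =>
      intro x
      have := hgp x
      exact isProb_bind (measurable_iterK hg n) ih

theorem iterK_add {g : X → Measure X} (hg : Measurable g) (s t : ℕ) (x : X) :
    iterK g (s + t) x = (iterK g s x).bind (iterK g t) := by
  induction s generalizing x with
  | zero =>
      rw [Nat.zero_add]
      exact (Measure.dirac_bind (measurable_iterK hg t) x).symm
  | succ s ih =>
      have h1 : s + 1 + t = (s + t) + 1 := by omega
      rw [h1]
      show (g x).bind (iterK g (s + t)) = ((g x).bind (iterK g s)).bind (iterK g t)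
      rw [Measure.bind_bind (measurable_iterK hg s).aemeasurable (measurable_iterK hg t).aemeasurable]
      congr 1
      ext y : 1
      exact ih y

theorem bind_stationary {g : X → Measure X} {π : Measure X} (hg : Measurable g)
    (hstat : Stationary g π) : π.bind g = π :=
  Measure.ext fun A hA => by rw [Measure.bind_apply hA hg.aemeasurable]; exact hstat A hA

theorem bind_iterK_stationary {g : X → Measure X} {π : Measure X} (hg : Measurable g)
    (hstat : Stationary g π) (s : ℕ) : π.bind (iterK g s) = π := by
  induction s with
  | zero => exact Measure.bind_dirac
  | succ s ih =>
      have h1 : π.bind (iterK g (s + 1)) = π.bind (iterK g 1) := by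
        have e : ∀ x, iterK g (s + 1) x = (iterK g s x).bind (iterK g 1) := by
          intro x
          have := iterK_add hg s 1 x
          exact this
        calc π.bind (iterK g (s + 1)) = π.bind (fun x => (iterK g s x).bind (iterK g 1)) := by
              congr 1; ext x : 1; exact e x
          _ = (π.bind (iterK g s)).bind (iterK g 1) :=
              (Measure.bind_bind (measurable_iterK hg s).aemeasurable (measurable_iterK hg 1).aemeasurable).symm
          _ = π.bind (iterK g 1) := by rw [ih]
      rw [h1]
      show π.bind (fun x => (g x).bind (iterK g 0)) = π
      have e0 : ∀ x : X, (g x).bind (iterK g 0) = g x := fun x => Measure.bind_dirac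
      calc π.bind (fun x => (g x).bind (iterK g 0)) = π.bind g := by
            congr 1; ext x : 1; exact e0 x
        _ = π := bind_stationary hg hstat


theorem tv_iterK_pi_le_dbar {g : X → Measure X} {π : Measure X} (hg : Measurable g)
    (hgp : ∀ x, IsProbabilityMeasure (g x)) [IsProbabilityMeasure π]
    (hstat : Stationary g π) (s : ℕ) (x : X) :
    tv (iterK g s x) π ≤ dbar g s := by
  have h1 : π = π.bind (iterK g s) := (bind_iterK_stationary hg hstat s).symm
  have h2 : iterK g s x = π.bind (fun _ => iterK g s x) := by
    rw [Measure.bind_const, measure_univ, one_smul]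
  calc tv (iterK g s x) π
      = tv (π.bind fun _ => iterK g s x) (π.bind (iterK g s)) := by rw [← h1, ← h2]
    _ ≤ ⨆ y, tv (iterK g s x) (iterK g s y) :=
        tv_bind_pair measurable_const (measurable_iterK hg s)
    _ ≤ dbar g s := iSup_le fun y => le_biSup_tv (K := iterK g s) x y

theorem dbar_add {g : X → Measure X} (hg : Measurable g)
    (hgp : ∀ x, IsProbabilityMeasure (g x)) (s t : ℕ) :
    dbar g (s + t) ≤ dbar g s * dbar g t := by
  refine iSup_le fun x => iSup_le fun y => ?_
  rw [iterK_add hg s t x, iterK_add hg s t y]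
  haveI := isProb_iterK hg hgp s x
  haveI := isProb_iterK hg hgp s y
  refine (tv_bind_le_mul (measurable_iterK hg t) (isProb_iterK hg hgp t)).trans ?_
  exact mul_le_mul' (le_biSup_tv (K := iterK g s) x y) le_rfl

theorem tv_iterK_perturb {g g' : X → Measure X} (hg : Measurable g)
    (hgp : ∀ x, IsProbabilityMeasure (g x)) (hg' : Measurable g')
    (hg'p : ∀ x, IsProbabilityMeasure (g' x)) (s : ℕ) :
    ∀ x, tv (iterK g s x) (iterK g' s x) ≤ (s : ℝ≥0∞) * ⨆ z, tv (g z) (g' z) := by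
  induction s with
  | zero =>
      intro x
      rw [show iterK g 0 x = Measure.dirac x from rfl,
        show iterK g' 0 x = Measure.dirac x from rfl, tv_self]
      exact zero_le
  | succ s ih =>
      intro x
      haveI := hgp x
      haveI := hg'p x
      have e1 : iterK g (s + 1) x = (g x).bind (iterK g s) := rfl
      have e2 : iterK g' (s + 1) x = (g' x).bind (iterK g' s) := rfl
      rw [e1, e2]
      have hmid : tv ((g x).bind (iterK g s)) ((g x).bind (iterK g' s)) ≤
          (s : ℝ≥0∞) * ⨆ z, tv (g z) (g' z) := by
        refine (tv_bind_pair (measurable_iterK hg s) (measurable_iterK hg' s)).trans ?_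
        exact iSup_le fun y => ih y
      have hlast : tv ((g x).bind (iterK g' s)) ((g' x).bind (iterK g' s)) ≤
          ⨆ z, tv (g z) (g' z) := by
        refine (tv_bind_le_one (measurable_iterK hg' s) (isProb_iterK hg' hg'p s)).trans ?_
        exact le_iSup (fun z => tv (g z) (g' z)) x
      calc tv ((g x).bind (iterK g s)) ((g' x).bind (iterK g' s))
          ≤ tv ((g x).bind (iterK g s)) ((g x).bind (iterK g' s)) +
            tv ((g x).bind (iterK g' s)) ((g' x).bind (iterK g' s)) := tv_triangle _ _ _
        _ ≤ (s : ℝ≥0∞) * (⨆ z, tv (g z) (g' z)) + ⨆ z, tv (g z) (g' z) :=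
            add_le_add hmid hlast
        _ = ((s + 1 : ℕ) : ℝ≥0∞) * ⨆ z, tv (g z) (g' z) := by
            push_cast
            ring

theorem div_le_div_num {a b c d : ℝ≥0∞} (hb : b ≠ 0) (hb' : b ≠ ∞) (hd : d ≠ 0) (hd' : d ≠ ∞)
    (h : a * d ≤ c * b) : a / b ≤ c / d := by
  rw [ENNReal.div_le_iff hb hb', mul_comm, ← mul_div_assoc,
    ENNReal.le_div_iff_mul_le (Or.inl hd) (Or.inl hd'), mul_comm b c]
  exact h

theorem div_eq_div_num {a b c d : ℝ≥0∞} (hb : b ≠ 0) (hb' : b ≠ ∞) (hd : d ≠ 0) (hd' : d ≠ ∞)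
    (h : a * d = c * b) : a / b = c / d :=
  le_antisymm (div_le_div_num hb hb' hd hd' h.le) (div_le_div_num hd hd' hb hb' h.ge)

theorem div_mul_div' (a c : ℝ≥0∞) {b d : ℝ≥0∞} (hb : b ≠ 0) (hd : d ≠ 0) :
    a / b * (c / d) = a * c / (b * d) := by
  rw [div_eq_mul_inv, div_eq_mul_inv, div_eq_mul_inv, ENNReal.mul_inv (Or.inl hb) (Or.inr hd)]
  ring

theorem four_steps_num :
    (((1:ℝ≥0∞)/4+1/256)+(1/4+1/256)) * ((((1:ℝ≥0∞)/4+1/256)+(1/4+1/256)) *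
      ((((1:ℝ≥0∞)/4+1/256)+(1/4+1/256)) * (((1:ℝ≥0∞)/4+1/256)+(1/4+1/256)))) ≤ 1/4 := by
  have h1 : (1:ℝ≥0∞)/4 = 64/256 :=
    div_eq_div_num (by norm_num) (by norm_num) (by norm_num) (by norm_num) (by norm_num)
  have h2 : ((1:ℝ≥0∞)/4+1/256)+(1/4+1/256) = 130/256 := by
    rw [h1, ENNReal.div_add_div_same, ENNReal.div_add_div_same]; norm_num
  rw [h2, div_mul_div' _ _ (by norm_num) (by norm_num),
    div_mul_div' _ _ (by norm_num) (by norm_num), div_mul_div' _ _ (by norm_num) (by norm_num)]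
  exact div_le_div_num (by norm_num) (by norm_num) (by norm_num) (by norm_num) (by norm_num)

theorem four_steps {g : X → Measure X} {π ρ : Measure X} (hg : Measurable g)
    (hgp : ∀ x, IsProbabilityMeasure (g x)) [IsProbabilityMeasure π]
    (hstat : Stationary g π) {m : ℕ}
    (hm : ∀ x, tv (iterK g m x) ρ ≤ 1/4 + 1/256) :
    ∀ x, tv (iterK g (m + (m + (m + m))) x) π ≤ 1/4 := by
  intro x
  have hd : dbar g m ≤ (1/4 + 1/256) + (1/4 + 1/256) := by
    refine iSup_le fun a => iSup_le fun b => ?_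
    refine (tv_triangle _ ρ _).trans (add_le_add (hm a) ?_)
    rw [tv_comm]; exact hm b
  have h4 : dbar g (m + (m + (m + m))) ≤
      (((1:ℝ≥0∞)/4+1/256)+(1/4+1/256)) * ((((1:ℝ≥0∞)/4+1/256)+(1/4+1/256)) *
        ((((1:ℝ≥0∞)/4+1/256)+(1/4+1/256)) * (((1:ℝ≥0∞)/4+1/256)+(1/4+1/256)))) := by
    refine (dbar_add hg hgp m _).trans (mul_le_mul' hd ?_)
    refine (dbar_add hg hgp m _).trans (mul_le_mul' hd ?_)
    exact (dbar_add hg hgp m m).trans (mul_le_mul' hd hd)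
  exact (tv_iterK_pi_le_dbar hg hgp hstat _ x).trans (h4.trans four_steps_num)

theorem exists_of_mixTime_ne_top {g : X → Measure X} {π : Measure X} {ε : ℝ≥0∞}
    (h : mixTime g π ε ≠ ⊤) : ∃ t : ℕ, ∀ x, tv (iterK g t x) π ≤ ε := by
  by_contra hc
  push_neg at hc
  apply h
  rw [mixTime, iInf_eq_top]
  intro t
  rw [iInf_eq_top]
  intro ht
  obtain ⟨x, hx⟩ := hc t
  exact absurd (ht x) (not_le.mpr hx)

end Aux

/-- perturbation bound on mixing times. -/
theorem stmt16 {X : Type*} [MetricSpace X] [MeasurableSpace X] [BorelSpace X]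
    [SigmaCompactSpace X] (g g' : X → Measure X) (π π' : Measure X)
    (hg : IsMarkov g) (hg' : IsMarkov g')
    (hπ : IsProbabilityMeasure π) (hπ' : IsProbabilityMeasure π')
    (hstat : Stationary g π) (hstat' : Stationary g' π')
    (hclose : (⨆ x, tv (g x) (g' x)) ≤ (256 * mixTime g π (1 / 4))⁻¹) :
    (1 / 4 : ℝ≥0∞) * mixTime g' π' (1 / 4) ≤ mixTime g π (1 / 4) ∧
      mixTime g π (1 / 4) ≤ 4 * mixTime g' π' (1 / 4) := by
  classical
  haveI := hπ
  haveI := hπ'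
  have hgm : Measurable g := Measure.measurable_of_measurable_coe g hg.2
  have hg'm : Measurable g' := Measure.measurable_of_measurable_coe g' hg'.2
  have hgp := hg.1
  have hg'p := hg'.1
  set ε := ⨆ x, tv (g x) (g' x) with hεdef
  by_cases hss : ∀ x y : X, x = y
  · -- degenerate case: every chain mixes instantly
    have h0 : ∀ (k : X → Measure X) (π₀ : Measure X), IsProbabilityMeasure π₀ →
        mixTime k π₀ (1/4) = 0 := by
      intro k π₀ hp
      have hP : ∀ x, tv (iterK k 0 x) π₀ ≤ 1/4 := by
        intro x
        have he : tv (iterK k 0 x) π₀ = 0 := by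
          refine le_antisymm (tv_le_of ?_ ?_) (zero_le)
          · intro A hA
            by_cases hx : x ∈ A
            · have hAu : A = Set.univ := Set.eq_univ_of_forall fun y => (hss y x) ▸ hx
              rw [show iterK k 0 x = Measure.dirac x from rfl, hAu, measure_univ, measure_univ]
              exact le_add_right le_rfl
            · have hAe : A = ∅ := by
                rw [Set.eq_empty_iff_forall_notMem]
                intro y hy
                exact hx ((hss x y) ▸ hy)
              rw [show iterK k 0 x = Measure.dirac x from rfl, hAe]
              simp
          · intro A hA
            by_cases hx : x ∈ A
            · have hAu : A = Set.univ := Set.eq_univ_of_forall fun y => (hss y x) ▸ hx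
              rw [show iterK k 0 x = Measure.dirac x from rfl, hAu, measure_univ, measure_univ]
              exact le_add_right le_rfl
            · have hAe : A = ∅ := by
                rw [Set.eq_empty_iff_forall_notMem]
                intro y hy
                exact hx ((hss x y) ▸ hy)
              rw [show iterK k 0 x = Measure.dirac x from rfl, hAe]
              simp
        rw [he]
        exact zero_le
      refine le_antisymm ?_ (zero_le)
      have := iInf₂_le (f := fun (t : ℕ) (_ : ∀ x, tv (iterK k t x) π₀ ≤ 1/4) => (t : ℝ≥0∞))
        0 hP
      exact le_of_le_of_eq this Nat.cast_zero
    constructor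
    · rw [h0 g' π' hπ']
      simp
    · rw [h0 g π hπ]
      exact zero_le
  push_neg at hss
  obtain ⟨x₀, y₀, hxy⟩ := hss
  -- time-0 mixing is impossible
  have hnot0 : ∀ π₀ : Measure X, IsProbabilityMeasure π₀ →
      ¬ (∀ x : X, tv (Measure.dirac x) π₀ ≤ 1/4) := by
    intro π₀ hp hall
    haveI := hp
    have hsx : ∀ x : X, (3:ℝ≥0∞)/4 ≤ π₀ {x} := by
      intro x
      have h1 : (Measure.dirac x) {x} ≤ π₀ {x} + tv (Measure.dirac x) π₀ :=
        apply_le_tv (measurableSet_singleton x)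
      rw [Measure.dirac_apply_of_mem (Set.mem_singleton x)] at h1
      have h2 : (1:ℝ≥0∞) ≤ π₀ {x} + 1/4 := h1.trans (add_le_add_right (hall x) _)
      have h3 : (1:ℝ≥0∞) - 1/4 ≤ (π₀ {x} + 1/4) - 1/4 := tsub_le_tsub_right h2 _
      rw [ENNReal.add_sub_cancel_right (by simp : (1:ℝ≥0∞)/4 ≠ ⊤)] at h3
      have h4 : (1:ℝ≥0∞) - 1/4 = 3/4 := by
        refine ENNReal.sub_eq_of_eq_add (by simp) ?_
        rw [ENNReal.div_add_div_same]
        norm_num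
        exact (ENNReal.div_self (by norm_num) (by norm_num)).symm
      rw [h4] at h3
      exact h3
    have hdisj : Disjoint ({x₀} : Set X) {y₀} := Set.disjoint_singleton.mpr hxy
    have hsum : π₀ ({x₀} ∪ {y₀}) = π₀ {x₀} + π₀ {y₀} :=
      measure_union hdisj (measurableSet_singleton y₀)
    have hcontr : (3:ℝ≥0∞)/4 + 3/4 ≤ 1 := by
      refine (add_le_add (hsx x₀) (hsx y₀)).trans ?_
      rw [← hsum]
      exact prob_le_one
    rw [ENNReal.div_add_div_same] at hcontr
    norm_num at hcontr
    have : (6:ℝ≥0∞)/4 ≤ 4/4 := by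
      rw [ENNReal.div_self (by norm_num) (by norm_num)]
      exact hcontr
    have h9 := (ENNReal.div_le_iff (by norm_num : (4:ℝ≥0∞) ≠ 0)
      (by norm_num : (4:ℝ≥0∞) ≠ ⊤)).mp this
    rw [ENNReal.div_self (by norm_num) (by norm_num), one_mul] at h9
    exact absurd h9 (by norm_num)
  -- Part 1
  have part1 : (1/4 : ℝ≥0∞) * mixTime g' π' (1/4) ≤ mixTime g π (1/4) := by
    rcases eq_or_ne (mixTime g π (1/4)) ⊤ with hT | hT
    · rw [hT]; exact le_top
    obtain ⟨t, ht⟩ := exists_of_mixTime_ne_top hT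
    have hex : ∃ t : ℕ, ∀ x, tv (iterK g t x) π ≤ 1/4 := ⟨t, ht⟩
    have hPn : ∀ x, tv (iterK g (Nat.find hex) x) π ≤ 1/4 := Nat.find_spec hex
    set n := Nat.find hex with hn
    have hTn : mixTime g π (1/4) = n :=
      le_antisymm (iInf₂_le n hPn)
        (le_iInf₂ fun u hu => Nat.cast_le.mpr (Nat.find_min' hex hu))
    have hn0 : n ≠ 0 := by
      intro h0
      refine hnot0 π hπ fun x => ?_
      have hx := hPn x
      rw [h0] at hx
      exact hx
    have hεn : (n : ℝ≥0∞) * ε ≤ 1/256 := by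
      have h1 : ε ≤ (256 * (n : ℝ≥0∞))⁻¹ := by rw [← hTn]; exact hclose
      calc (n : ℝ≥0∞) * ε ≤ (n : ℝ≥0∞) * (256 * (n : ℝ≥0∞))⁻¹ := mul_le_mul_right h1 _
        _ = 1/256 := by
            rw [ENNReal.mul_inv (Or.inl (by norm_num)) (Or.inl (by norm_num)),
              ← mul_assoc, mul_comm (n : ℝ≥0∞) ((256:ℝ≥0∞))⁻¹, mul_assoc,
              ENNReal.mul_inv_cancel (Nat.cast_ne_zero.mpr hn0) (ENNReal.natCast_ne_top n),
              mul_one, one_div]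
    have hm' : ∀ x, tv (iterK g' n x) π ≤ 1/4 + 1/256 := by
      intro x
      calc tv (iterK g' n x) π
          ≤ tv (iterK g' n x) (iterK g n x) + tv (iterK g n x) π := tv_triangle _ _ _
        _ ≤ (n : ℝ≥0∞) * ε + 1/4 := by
            refine add_le_add ?_ (hPn x)
            rw [tv_comm]
            exact tv_iterK_perturb hgm hgp hg'm hg'p n x
        _ ≤ 1/256 + 1/4 := add_le_add_left hεn _
        _ = 1/4 + 1/256 := add_comm _ _
    have h4 := four_steps hg'm hg'p hstat' hm'
    have hT4 : mixTime g' π' (1/4) ≤ ((n + (n + (n + n)) : ℕ) : ℝ≥0∞) := iInf₂_le _ h4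
    rw [hTn]
    calc (1/4 : ℝ≥0∞) * mixTime g' π' (1/4)
        ≤ (1/4) * ((n + (n + (n + n)) : ℕ) : ℝ≥0∞) := mul_le_mul_right hT4 _
      _ = (1/4) * (4 * (n : ℝ≥0∞)) := by push_cast; ring
      _ = (n : ℝ≥0∞) := by
          rw [← mul_assoc, one_div,
            ENNReal.inv_mul_cancel (by norm_num) (by norm_num), one_mul]
  -- Part 2
  have part2 : mixTime g π (1/4) ≤ 4 * mixTime g' π' (1/4) := by
    rcases eq_or_ne (mixTime g' π' (1/4)) ⊤ with hT' | hT'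
    · rw [hT', ENNReal.mul_top (by norm_num)]
      exact le_top
    obtain ⟨t', ht'⟩ := exists_of_mixTime_ne_top hT'
    have hex' : ∃ t : ℕ, ∀ x, tv (iterK g' t x) π' ≤ 1/4 := ⟨t', ht'⟩
    have hPm : ∀ x, tv (iterK g' (Nat.find hex') x) π' ≤ 1/4 := Nat.find_spec hex'
    set m := Nat.find hex' with hmdef
    have hTm : mixTime g' π' (1/4) = m :=
      le_antisymm (iInf₂_le m hPm)
        (le_iInf₂ fun u hu => Nat.cast_le.mpr (Nat.find_min' hex' hu))
    have key : (m : ℝ≥0∞) * ε ≤ 1/256 → mixTime g π (1/4) ≤ 4 * mixTime g' π' (1/4) := by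
      intro hmε
      have hm2 : ∀ x, tv (iterK g m x) π' ≤ 1/4 + 1/256 := by
        intro x
        calc tv (iterK g m x) π'
            ≤ tv (iterK g m x) (iterK g' m x) + tv (iterK g' m x) π' := tv_triangle _ _ _
          _ ≤ (m : ℝ≥0∞) * ε + 1/4 :=
              add_le_add (tv_iterK_perturb hgm hgp hg'm hg'p m x) (hPm x)
          _ ≤ 1/256 + 1/4 := add_le_add_left hmε _
          _ = 1/4 + 1/256 := add_comm _ _
      have h4 := four_steps hgm hgp hstat hm2
      have hle : mixTime g π (1/4) ≤ ((m + (m + (m + m)) : ℕ) : ℝ≥0∞) := iInf₂_le _ h4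
      refine hle.trans ?_
      rw [hTm]
      refine le_of_eq ?_
      push_cast
      ring
    rcases eq_or_ne (mixTime g π (1/4)) ⊤ with hT | hT
    · refine key ?_
      rw [hT] at hclose
      have hε0 : ε = 0 := by
        refine le_antisymm ?_ (zero_le)
        refine hclose.trans ?_
        rw [ENNReal.mul_top (by norm_num), ENNReal.inv_top]
      rw [hε0, mul_zero]
      exact zero_le
    obtain ⟨t, ht⟩ := exists_of_mixTime_ne_top hT
    have hex : ∃ t : ℕ, ∀ x, tv (iterK g t x) π ≤ 1/4 := ⟨t, ht⟩
    have hPn : ∀ x, tv (iterK g (Nat.find hex) x) π ≤ 1/4 := Nat.find_spec hex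
    set n := Nat.find hex with hn
    have hTn : mixTime g π (1/4) = n :=
      le_antisymm (iInf₂_le n hPn)
        (le_iInf₂ fun u hu => Nat.cast_le.mpr (Nat.find_min' hex hu))
    by_cases hnm : n ≤ m
    · rw [hTn, hTm]
      calc ((n : ℕ) : ℝ≥0∞) ≤ (m : ℝ≥0∞) := Nat.cast_le.mpr hnm
        _ ≤ 4 * (m : ℝ≥0∞) := le_mul_of_one_le_left (zero_le) (by norm_num)
    · have hmn : m < n := lt_of_not_ge hnm
      have hn0 : n ≠ 0 := by omega
      refine key ?_
      have h1 : ε ≤ (256 * (n : ℝ≥0∞))⁻¹ := by rw [← hTn]; exact hclose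
      calc (m : ℝ≥0∞) * ε ≤ (n : ℝ≥0∞) * (256 * (n : ℝ≥0∞))⁻¹ :=
            mul_le_mul' (Nat.cast_le.mpr hmn.le) h1
        _ = 1/256 := by
            rw [ENNReal.mul_inv (Or.inl (by norm_num)) (Or.inl (by norm_num)),
              ← mul_assoc, mul_comm (n : ℝ≥0∞) ((256:ℝ≥0∞))⁻¹, mul_assoc,
              ENNReal.mul_inv_cancel (Nat.cast_ne_zero.mpr hn0) (ENNReal.natCast_ne_top n),
              mul_one, one_div]
  exact ⟨part1, part2⟩

end MixHit
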